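/- Let H ≥ 2 be a natural number, let p¹, p² : ℕ → ℝ take values in [0,1], and let a, b : ℕ → ℝ satisfy a_1 = (H−1)/(2H), b_1 = 1/(2H), a_{h+1} = ((1−p¹_h)/2)·a_h, and b_{h+1} = p¹_h·a_h + ((1−p²_h)/2)·b_h. Then for every h ≥ 1, a_h + b_h ≤ (1/2)^{h−1}. (Thus under any Markov policy in the Example 3.1 chain, the total occupancy of the states x¹ and x² at layer h is at most 2^{−(h−1)}.) -/

import Mathlib

/-- In the Example 3.1 chain, under any Markov policy the total
occupancy of the states `x¹` and `x²` at layer `h` is at most `2^{−(h−1)}`. -/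
theorem any_policy_top_occupancy_decay
    (H : ℕ) (hH : 2 ≤ H) (p1 p2 : ℕ → ℝ)
    (hp1 : ∀ h, 0 ≤ p1 h ∧ p1 h ≤ 1) (hp2 : ∀ h, 0 ≤ p2 h ∧ p2 h ≤ 1)
    (a b : ℕ → ℝ)
    (ha1 : a 1 = ((H : ℝ) - 1) / (2 * H))
    (hb1 : b 1 = 1 / (2 * H))
    (ha : ∀ h, 1 ≤ h → a (h + 1) = ((1 - p1 h) / 2) * a h)
    (hb : ∀ h, 1 ≤ h → b (h + 1) = p1 h * a h + ((1 - p2 h) / 2) * b h) :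
    ∀ h, 1 ≤ h → a h + b h ≤ (1 / 2 : ℝ) ^ (h - 1) := by
  have hHR : (2 : ℝ) ≤ (H : ℝ) := by exact_mod_cast hH
  have hHpos : (0 : ℝ) < 2 * (H : ℝ) := by linarith
  have key : ∀ h, 1 ≤ h → 0 ≤ a h ∧ 0 ≤ b h ∧
      2 * a h + b h ≤ (1 / 2 : ℝ) ^ (h - 1) := by
    intro h hh
    induction h, hh using Nat.le_induction with
    | base =>
      refine ⟨?_, ?_, ?_⟩
      · rw [ha1]; apply div_nonneg <;> linarith
      · rw [hb1]; positivity
      · rw [ha1, hb1]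
        simp only [Nat.sub_self, pow_zero]
        have e : 2 * (((H : ℝ) - 1) / (2 * H)) + 1 / (2 * H)
            = (2 * (H : ℝ) - 1) / (2 * H) := by field_simp; ring
        rw [e, div_le_one hHpos]
        linarith
    | succ k hk ih =>
      obtain ⟨ha0, hb0, hK⟩ := ih
      obtain ⟨hp1l, hp1u⟩ := hp1 k
      obtain ⟨hp2l, hp2u⟩ := hp2 k
      rw [ha k hk, hb k hk]
      refine ⟨by nlinarith, by nlinarith, ?_⟩
      have hpow : (1 / 2 : ℝ) ^ (k + 1 - 1) = (1 / 2 : ℝ) ^ (k - 1) * (1 / 2) := by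
        rw [← pow_succ]
        congr 1
        omega
      rw [hpow]
      nlinarith
  intro h hh
  rcases Nat.lt_or_ge h 2 with h1 | h2
  · have : h = 1 := by omega
    subst this
    rw [ha1, hb1]
    simp only [Nat.sub_self, pow_zero]
    rw [← add_div, div_le_one hHpos]
    linarith
  · obtain ⟨k, rfl⟩ : ∃ k, h = k + 1 := ⟨h - 1, by omega⟩
    have hk : 1 ≤ k := by omega
    obtain ⟨ha0, hb0, hK⟩ := key k hk
    obtain ⟨hp1l, hp1u⟩ := hp1 k
    obtain ⟨hp2l, hp2u⟩ := hp2 k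
    rw [ha k hk, hb k hk]
    have hpow : (1 / 2 : ℝ) ^ (k + 1 - 1) = (1 / 2 : ℝ) ^ (k - 1) * (1 / 2) := by
      rw [← pow_succ]
      congr 1
      omega
    rw [hpow]
    nlinarith
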